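/- In the CountSketch setup, for every k ∈ {1,…,n} the CountSketch estimate Y_k = σ(k)·Σ_{j : h(j)=h(k)} σ(j)·v_j satisfies E[‖Y_k − v_k‖₂²] ≤ (1/b)·Σ_{j ≠ k} ‖v_j‖₂². -/

import Mathlib

open MeasureTheory ProbabilityTheory

/-- A family of random variables is `k`-wise independent if every subfamily of at
most `k` of them is (mutually) independent. -/
def KWiseIndepFun {Ω ι β : Type*} [MeasurableSpace Ω] [MeasurableSpace β]
    (k : ℕ) (f : ι → Ω → β) (μ : Measure Ω) : Prop :=
  ∀ s : Finset ι, s.card ≤ k →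
    iIndepFun (m := fun _ : s => (inferInstance : MeasurableSpace β)) (fun i : s => f i) μ

/-- In the CountSketch setup — fixed vectors `v 1, …, v n ∈ ℝ^d`, `b ≥ 1`
buckets, pairwise independent uniform bucket indices `h i`, 4-wise independent uniform
random signs `sg i ∈ {−1, +1}`, with the sign family independent of the hash family —
for every `k` the CountSketch estimate `Y k = sg k • ∑_{j : h j = h k} sg j • v j`
satisfies `E[‖Y k − v k‖₂²] ≤ (1/b)·∑_{j ≠ k} ‖v j‖₂²`. -/
theorem countSketch_variance (d n b : ℕ) (hb : 1 ≤ b)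
    {Ω : Type*} [MeasurableSpace Ω] (μ : Measure Ω) [IsProbabilityMeasure μ]
    (v : Fin n → EuclideanSpace ℝ (Fin d))
    (h : Fin n → Ω → Fin b) (sg : Fin n → Ω → ℝ)
    (hmeas : ∀ i, Measurable (h i)) (smeas : ∀ i, Measurable (sg i))
    (hunif : ∀ i, ∀ j : Fin b, μ {ω | h i ω = j} = (b : ENNReal)⁻¹)
    (hpair : KWiseIndepFun 2 h μ)
    (sunif : ∀ i, μ {ω | sg i ω = 1} = 2⁻¹ ∧ μ {ω | sg i ω = -1} = 2⁻¹)
    (sfour : KWiseIndepFun 4 sg μ)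
    (hs_indep : IndepFun (fun ω (i : Fin n) => h i ω) (fun ω (i : Fin n) => sg i ω) μ)
    (k : Fin n) :
    ∫ ω, ‖(sg k ω •
        ∑ j ∈ Finset.univ.filter (fun j => h j ω = h k ω), sg j ω • v j) - v k‖ ^ 2 ∂μ
      ≤ (1 / (b : ℝ)) * ∑ j ∈ Finset.univ.erase k, ‖v j‖ ^ 2 := by
  classical
  have hb0 : (b : ENNReal) ≠ 0 := by
    simp only [ne_eq, Nat.cast_eq_zero]; omega
  set φ : ℝ → ℝ := fun r => if r = 1 then 1 else -1 with hφ
  have φmeas : Measurable φ :=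
    Measurable.ite (measurableSet_eq) measurable_const measurable_const
  set s' : Fin n → Ω → ℝ := fun i ω => φ (sg i ω) with hs'
  have s'meas : ∀ i, Measurable (s' i) := fun i => φmeas.comp (smeas i)
  have s'sq : ∀ i ω, s' i ω * s' i ω = 1 := by
    intro i ω; by_cases h1 : sg i ω = 1 <;> norm_num [hs', hφ, h1]
  have s'bdd : ∀ i ω, ‖s' i ω‖ ≤ 1 := by
    intro i ω; by_cases h1 : sg i ω = 1 <;> norm_num [hs', hφ, h1]
  -- a.e. the signs take values ±1, hence agree with s'
  have hae : ∀ᵐ ω ∂μ, ∀ i, sg i ω = s' i ω := by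
    rw [ae_all_iff]
    intro i
    have h1 : MeasurableSet {ω | sg i ω = 1} := smeas i (measurableSet_singleton 1)
    have h2 : MeasurableSet {ω | sg i ω = -1} := smeas i (measurableSet_singleton (-1))
    have hdisj : Disjoint {ω | sg i ω = 1} {ω | sg i ω = -1} := by
      rw [Set.disjoint_left]
      intro ω hw1 hw2
      simp only [Set.mem_setOf_eq] at hw1 hw2
      rw [hw1] at hw2; norm_num at hw2
    have hU : μ ({ω | sg i ω = 1} ∪ {ω | sg i ω = -1}) = 1 := by
      rw [measure_union hdisj h2, (sunif i).1, (sunif i).2, ENNReal.inv_two_add_inv_two]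
    have hcompl : μ ({ω | sg i ω = 1} ∪ {ω | sg i ω = -1})ᶜ = 0 := by
      rw [measure_compl (h1.union h2) (measure_ne_top μ _), hU, measure_univ, tsub_self]
    rw [ae_iff]
    refine measure_mono_null ?_ hcompl
    intro ω hω
    simp only [Set.mem_setOf_eq] at hω
    simp only [Set.mem_compl_iff, Set.mem_union, Set.mem_setOf_eq]
    rintro (h1' | h2')
    · exact hω (by norm_num [hs', hφ, h1'])
    · exact hω (by norm_num [hs', hφ, h2'])
  set E : Finset (Fin n) := Finset.univ.erase k with hE
  set c : Fin n → Ω → ℝ :=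
    fun j ω => (if h j ω = h k ω then (1 : ℝ) else 0) * (s' k ω * s' j ω) with hc
  have hsetm : ∀ j, MeasurableSet {ω | h j ω = h k ω} := fun j =>
    measurableSet_eq_fun (hmeas j) (hmeas k)
  have cmeas : ∀ j, Measurable (c j) := fun j =>
    (Measurable.ite (hsetm j) measurable_const measurable_const).mul
      ((s'meas k).mul (s'meas j))
  have cbdd : ∀ j ω, ‖c j ω‖ ≤ 1 := by
    intro j ω
    by_cases hcc : h j ω = h k ω <;>
      by_cases h1 : sg k ω = 1 <;> by_cases h2 : sg j ω = 1 <;>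
        norm_num [hc, hs', hφ, hcc, h1, h2]
  -- pointwise rewrite on the good event
  have key : ∀ ω, (∀ i, sg i ω = s' i ω) →
      ‖(sg k ω • ∑ j ∈ Finset.univ.filter (fun j => h j ω = h k ω), sg j ω • v j) - v k‖ ^ 2
      = ∑ j ∈ E, ∑ l ∈ E, (c j ω * c l ω) * (inner ℝ (v j) (v l) : ℝ) := by
    intro ω hω
    have hsum : (sg k ω • ∑ j ∈ Finset.univ.filter (fun j => h j ω = h k ω), sg j ω • v j) - v k
        = ∑ j ∈ E, c j ω • v j := by
      rw [Finset.sum_filter, ← Finset.add_sum_erase _ _ (Finset.mem_univ k)]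
      simp only [eq_self_iff_true, if_true]
      rw [smul_add, smul_smul]
      have hkk : sg k ω * sg k ω = 1 := by rw [hω k]; exact s'sq k ω
      rw [hkk, one_smul, add_sub_cancel_left, Finset.smul_sum]
      refine Finset.sum_congr rfl fun j hj => ?_
      by_cases hcc : h j ω = h k ω
      · simp [hc, hcc, hω j, hω k, smul_smul]
      · simp [hc, hcc]
    rw [hsum, ← real_inner_self_eq_norm_sq, sum_inner]
    refine Finset.sum_congr rfl fun j hj => ?_
    rw [inner_sum]
    refine Finset.sum_congr rfl fun l hl => ?_
    rw [real_inner_smul_left, real_inner_smul_right]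
    ring
  have haekey :
      (fun ω => ‖(sg k ω •
          ∑ j ∈ Finset.univ.filter (fun j => h j ω = h k ω), sg j ω • v j) - v k‖ ^ 2)
      =ᵐ[μ] fun ω => ∑ j ∈ E, ∑ l ∈ E, (c j ω * c l ω) * (inner ℝ (v j) (v l) : ℝ) := by
    filter_upwards [hae] with ω hω using key ω hω
  -- probability that two distinct hashes collide
  have hcol : ∀ j, j ≠ k → μ {ω | h j ω = h k ω} = (b : ENNReal)⁻¹ := by
    intro j hjk
    have hcard : ({j, k} : Finset (Fin n)).card ≤ 2 := by
      apply le_trans (Finset.card_insert_le _ _); simp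
    have hindep : IndepFun (h j) (h k) μ :=
      (hpair {j, k} hcard).indepFun
        (i := ⟨j, by simp⟩) (j := ⟨k, by simp⟩)
        (by simp [Subtype.ext_iff, hjk])
    have hset : {ω | h j ω = h k ω} = ⋃ t : Fin b, h j ⁻¹' {t} ∩ h k ⁻¹' {t} := by
      ext ω
      simp only [Set.mem_setOf_eq, Set.mem_iUnion, Set.mem_inter_iff, Set.mem_preimage,
        Set.mem_singleton_iff, exists_eq_right']
    have hdisj : Pairwise (Function.onFun Disjoint
        fun t : Fin b => h j ⁻¹' {t} ∩ h k ⁻¹' {t}) := by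
      intro t t' htt'
      rw [Function.onFun, Set.disjoint_left]
      rintro ω ⟨hj1, _⟩ ⟨hj2, _⟩
      simp only [Set.mem_preimage, Set.mem_singleton_iff] at hj1 hj2
      exact htt' (hj1 ▸ hj2 ▸ rfl)
    rw [hset, measure_iUnion hdisj (fun t =>
      (hmeas j (measurableSet_singleton t)).inter (hmeas k (measurableSet_singleton t)))]
    have hterm : ∀ t : Fin b, μ (h j ⁻¹' {t} ∩ h k ⁻¹' {t}) = (b : ENNReal)⁻¹ * (b : ENNReal)⁻¹ := by
      intro t
      rw [hindep.measure_inter_preimage_eq_mul _ _ (measurableSet_singleton t)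
        (measurableSet_singleton t)]
      have e1 : h j ⁻¹' {t} = {ω | h j ω = t} := rfl
      have e2 : h k ⁻¹' {t} = {ω | h k ω = t} := rfl
      rw [e1, e2, hunif j t, hunif k t]
    rw [tsum_fintype]
    simp only [hterm]
    rw [Finset.sum_const, Finset.card_univ, Fintype.card_fin, nsmul_eq_mul, ← mul_assoc,
      ENNReal.mul_inv_cancel hb0 (ENNReal.natCast_ne_top b), one_mul]
  -- ∫ s' i = 0
  have s'int : ∀ i, Integrable (s' i) μ :=
    fun i => (integrable_const (1 : ℝ)).mono' (s'meas i).aestronglyMeasurable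
      (Filter.Eventually.of_forall (s'bdd i))
  have hzero : ∀ i, ∫ ω, s' i ω ∂μ = 0 := by
    intro i
    have hrw : ∀ ω, s' i ω = Set.indicator {ω | sg i ω = 1} (fun _ => (2 : ℝ)) ω - 1 := by
      intro ω
      by_cases h1 : sg i ω = 1 <;> norm_num [hs', hφ, h1, Set.indicator_apply]
    have hm1 : MeasurableSet {ω | sg i ω = 1} := smeas i (measurableSet_singleton 1)
    calc ∫ ω, s' i ω ∂μ
        = ∫ ω, (Set.indicator {ω | sg i ω = 1} (fun _ => (2 : ℝ)) ω - 1) ∂μ := by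
          exact integral_congr_ae (Filter.Eventually.of_forall hrw)
      _ = (∫ ω, Set.indicator {ω | sg i ω = 1} (fun _ => (2 : ℝ)) ω ∂μ) - ∫ _, (1 : ℝ) ∂μ := by
          exact integral_sub ((integrable_const (2 : ℝ)).indicator hm1) (integrable_const 1)
      _ = 0 := by
          rw [integral_indicator_const _ hm1, integral_const]
          simp only [measureReal_def]
          rw [(sunif i).1, measure_univ]
          norm_num
  -- diagonal terms
  have hdiag : ∀ j, j ≠ k → ∫ ω, c j ω * c j ω ∂μ = 1 / (b : ℝ) := by
    intro j hjk
    have hpt : ∀ ω, c j ω * c j ω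
        = Set.indicator {ω | h j ω = h k ω} (fun _ => (1 : ℝ)) ω := by
      intro ω
      by_cases hcc : h j ω = h k ω
      · simp only [hc, if_pos hcc, one_mul, Set.indicator_apply, Set.mem_setOf_eq, hcc, if_true]
        linear_combination (s' j ω * s' j ω) * s'sq k ω + s'sq j ω
      · simp [hc, hcc, Set.indicator_apply]
    rw [integral_congr_ae (Filter.Eventually.of_forall hpt),
      integral_indicator_const _ (hsetm j), measureReal_def, hcol j hjk]
    rw [ENNReal.toReal_inv]
    simp
  -- off-diagonal terms vanish
  have hoff : ∀ j l, j ≠ l → ∫ ω, c j ω * c l ω ∂μ = 0 := by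
    intro j l hjl
    set F : Ω → ℝ := fun ω => if h j ω = h k ω ∧ h l ω = h k ω then (1 : ℝ) else 0 with hF
    set G : Ω → ℝ := fun ω => s' j ω * s' l ω with hG
    have hpt : ∀ ω, c j ω * c l ω = F ω * G ω := by
      intro ω
      by_cases h1 : h j ω = h k ω
      · by_cases h2 : h l ω = h k ω
        · simp only [hc, hF, hG, if_pos h1, if_pos h2, if_pos (And.intro h1 h2), one_mul]
          linear_combination (s' j ω * s' l ω) * s'sq k ω
        · simp [hc, hF, hG, h1, h2]
      · simp [hc, hF, hG, h1]
    have fmeas : Measurable (fun x : Fin n → Fin b => if x j = x k ∧ x l = x k then (1:ℝ) else 0) := by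
      have m1 : MeasurableSet {x : Fin n → Fin b | x j = x k} :=
        measurableSet_eq_fun (measurable_pi_apply j) (measurable_pi_apply k)
      have m2 : MeasurableSet {x : Fin n → Fin b | x l = x k} :=
        measurableSet_eq_fun (measurable_pi_apply l) (measurable_pi_apply k)
      exact Measurable.ite (m1.inter m2) measurable_const measurable_const
    have gmeas : Measurable (fun y : Fin n → ℝ => φ (y j) * φ (y l)) :=
      (φmeas.comp (measurable_pi_apply j)).mul (φmeas.comp (measurable_pi_apply l))
    have hFG : IndepFun F G μ := hs_indep.comp fmeas gmeas
    have Fint : Integrable F μ :=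
      (integrable_const (1 : ℝ)).mono'
        (Measurable.ite ((hsetm j).inter (hsetm l)) measurable_const
          measurable_const).aestronglyMeasurable
        (Filter.Eventually.of_forall fun ω => by
          by_cases hcc : h j ω = h k ω ∧ h l ω = h k ω <;> simp [hF, hcc])
    have Gint : Integrable G μ :=
      (integrable_const (1 : ℝ)).mono' ((s'meas j).mul (s'meas l)).aestronglyMeasurable
        (Filter.Eventually.of_forall fun ω => by
          rw [hG]
          calc ‖s' j ω * s' l ω‖ = ‖s' j ω‖ * ‖s' l ω‖ := norm_mul _ _
            _ ≤ 1 * 1 := mul_le_mul (s'bdd j ω) (s'bdd l ω) (norm_nonneg _) zero_le_one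
            _ = 1 := one_mul 1)
    have hGzero : ∫ ω, G ω ∂μ = 0 := by
      have hcard : ({j, l} : Finset (Fin n)).card ≤ 4 := by
        apply le_trans (Finset.card_insert_le _ _); simp
      have hjl' : IndepFun (s' j) (s' l) μ :=
        ((sfour {j, l} hcard).indepFun (i := ⟨j, by simp⟩) (j := ⟨l, by simp⟩)
          (by simp [Subtype.ext_iff, hjl])).comp φmeas φmeas
      calc ∫ ω, G ω ∂μ = (∫ ω, s' j ω ∂μ) * ∫ ω, s' l ω ∂μ :=
            hjl'.integral_mul_eq_mul_integral (s'int j).1 (s'int l).1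
        _ = 0 := by rw [hzero j, zero_mul]
    calc ∫ ω, c j ω * c l ω ∂μ = ∫ ω, F ω * G ω ∂μ :=
          integral_congr_ae (Filter.Eventually.of_forall hpt)
      _ = (∫ ω, F ω ∂μ) * ∫ ω, G ω ∂μ := hFG.integral_mul_eq_mul_integral Fint.1 Gint.1
      _ = 0 := by rw [hGzero, mul_zero]
  -- integrability of the summands
  have hint : ∀ j l : Fin n,
      Integrable (fun ω => c j ω * c l ω * (inner ℝ (v j) (v l) : ℝ)) μ := by
    intro j l
    refine (integrable_const (‖v j‖ * ‖v l‖)).mono'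
      (((cmeas j).mul (cmeas l)).mul measurable_const).aestronglyMeasurable
      (Filter.Eventually.of_forall fun ω => ?_)
    calc ‖c j ω * c l ω * (inner ℝ (v j) (v l) : ℝ)‖
        = ‖c j ω‖ * ‖c l ω‖ * ‖(inner ℝ (v j) (v l) : ℝ)‖ := by rw [norm_mul, norm_mul]
      _ ≤ 1 * 1 * (‖v j‖ * ‖v l‖) := by
          have hip : ‖(inner ℝ (v j) (v l) : ℝ)‖ ≤ ‖v j‖ * ‖v l‖ := norm_inner_le_norm _ _
          exact mul_le_mul (mul_le_mul (cbdd j ω) (cbdd l ω) (norm_nonneg _) zero_le_one)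
            hip (norm_nonneg _) (by norm_num)
      _ = ‖v j‖ * ‖v l‖ := by ring
  -- assemble
  rw [integral_congr_ae haekey,
    integral_finset_sum E (fun j _ => integrable_finset_sum E (fun l _ => hint j l))]
  refine le_of_eq ?_
  rw [Finset.mul_sum]
  refine Finset.sum_congr rfl fun j hj => ?_
  have hjk : j ≠ k := Finset.ne_of_mem_erase hj
  rw [integral_finset_sum E (fun l _ => hint j l),
    Finset.sum_eq_single_of_mem j hj
      (fun l hl hlj => by rw [integral_mul_const, hoff j l (Ne.symm hlj), zero_mul]),
    integral_mul_const, hdiag j hjk, real_inner_self_eq_norm_sq]
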